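/- Let p ≥ 3 and let F_p be a free set of graphs of order p that contains a subgraph of the star S_p different from the edgeless graph on p vertices. Then F_p is hard. -/

import Mathlib

/-- `A` is isomorphic to a subgraph of `B` (both on `p` vertices). -/
def SubIso {p : ℕ} (A B : SimpleGraph (Fin p)) : Prop :=
  ∃ e : Fin p ≃ Fin p, A.map e.toEmbedding ≤ B

/-- A set of graphs of order `p` is free if no member is isomorphic to a subgraph
of another (distinct) member. -/
def Free {p : ℕ} (Fp : Set (SimpleGraph (Fin p))) : Prop :=
  ∀ A ∈ Fp, ∀ B ∈ Fp, A ≠ B → ¬ SubIso A B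

/-- A set `Fp` of graphs of order `p` is hard: there are a graph `J` and two distinct
non-edges `e₁, e₂` of `J` such that no subgraph of `J` is isomorphic to a member of `Fp`,
while both `J + e₁` and `J + e₂` contain subgraphs isomorphic to members of `Fp`. -/
def Hard {p : ℕ} (Fp : Set (SimpleGraph (Fin p))) : Prop :=
  ∃ J : SimpleGraph (Fin p), ∃ e₁ e₂ : Sym2 (Fin p),
    ¬ e₁.IsDiag ∧ ¬ e₂.IsDiag ∧ e₁ ∉ J.edgeSet ∧ e₂ ∉ J.edgeSet ∧ e₁ ≠ e₂ ∧
    (∀ A ∈ Fp, ¬ SubIso A J) ∧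
    (∃ A ∈ Fp, SubIso A (J ⊔ SimpleGraph.fromEdgeSet {e₁})) ∧
    (∃ A ∈ Fp, SubIso A (J ⊔ SimpleGraph.fromEdgeSet {e₂}))

/-- The star on `p` vertices, centered at vertex `0`. -/
def starGraph (p : ℕ) : SimpleGraph (Fin p) :=
  SimpleGraph.fromRel (fun u v => u.val = 0 ∧ v.val ≠ 0)

/-- if `p ≥ 3` and a free set `Fp` of graphs of order `p` contains a
non-edgeless subgraph of the star `S_p`, then `Fp` is hard. -/
theorem hard_of_star_subgraph {p : ℕ} (hp : 3 ≤ p) (Fp : Set (SimpleGraph (Fin p)))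
    (hfree : Free Fp)
    (hstar : ∃ A ∈ Fp, A ≠ ⊥ ∧ SubIso A (starGraph p)) :
    Hard Fp := by
  obtain ⟨A, hA, hAne, σ, hσ⟩ := hstar
  set S : Set (SimpleGraph (Fin p)) := {J | ∀ B ∈ Fp, ¬ SubIso B J} with hSdef
  -- ⊥ belongs to S
  have hbotS : (⊥ : SimpleGraph (Fin p)) ∈ S := by
    rintro B hB ⟨τ, hτ⟩
    have hBbot : B = ⊥ := by
      ext u v
      simp only [SimpleGraph.bot_adj, iff_false]
      intro h
      exact hτ (SimpleGraph.map_adj_apply.mpr h)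
    subst hBbot
    have hne : (⊥ : SimpleGraph (Fin p)) ≠ A := fun h => hAne h.symm
    exact hfree ⊥ hB A hA hne ⟨Equiv.refl _, by
      intro u v h
      simp only [SimpleGraph.map_adj] at h
      obtain ⟨a, b, hab, _, _⟩ := h
      exact absurd hab (by simp)⟩
  -- a maximal element of S
  obtain ⟨J, hJS, hJmax⟩ :=
    Set.Finite.exists_maximalFor id S (Set.toFinite S) ⟨⊥, hbotS⟩
  simp only [id] at hJmax
  -- maximality: adding any non-edge creates a member of Fp
  have hmax : ∀ e : Sym2 (Fin p), ¬ e.IsDiag → e ∉ J.edgeSet →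
      ∃ B ∈ Fp, SubIso B (J ⊔ SimpleGraph.fromEdgeSet {e}) := by
    intro e hd he
    by_contra h
    push_neg at h
    have hmem : J ⊔ SimpleGraph.fromEdgeSet {e} ∈ S := fun B hB hsub => h B hB hsub
    have heq := le_antisymm le_sup_left (hJmax hmem le_sup_left)
    apply he
    rw [heq]
    simp only [SimpleGraph.edgeSet_sup, SimpleGraph.edgeSet_fromEdgeSet, Set.mem_union]
    right
    exact ⟨rfl, hd⟩
  -- J has a non-edge
  have hne1 : ∃ x y : Fin p, x ≠ y ∧ ¬ J.Adj x y := by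
    by_contra h
    push_neg at h
    exact hJS A hA ⟨σ, fun u v hu => by
      simp only [SimpleGraph.map_adj] at hu
      obtain ⟨a, b, hab, rfl, rfl⟩ := hu
      exact h _ _ (fun hc => (A.ne_of_adj hab) (σ.toEmbedding.injective hc))⟩
  obtain ⟨x, y, hxy, hJxy⟩ := hne1
  -- J has a second non-edge
  have hne2 : ∃ x' y' : Fin p, x' ≠ y' ∧ ¬ J.Adj x' y' ∧ s(x', y') ≠ s(x, y) := by
    by_contra h
    push_neg at h
    -- then every pair except {x,y} is an edge; find c ∉ {x,y}
    obtain ⟨c, hcx, hcy⟩ : ∃ c : Fin p, c ≠ x ∧ c ≠ y := by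
      by_contra hc
      push_neg at hc
      have huniv : (Finset.univ : Finset (Fin p)) ⊆ {x, y} := by
        intro c _
        rcases eq_or_ne c x with rfl | hcx
        · simp
        · simp [hc c hcx]
      have h1 := Finset.card_le_card huniv
      have h2 : ({x, y} : Finset (Fin p)).card ≤ 2 :=
        (Finset.card_insert_le _ _).trans (by simp)
      simp only [Finset.card_univ, Fintype.card_fin] at h1
      omega
    have hc : ∀ w, w ≠ c → J.Adj c w := by
      intro w hw
      by_contra hadj
      have := h c w (Ne.symm hw) hadj
      rw [Sym2.eq_iff] at this
      rcases this with ⟨h1, _⟩ | ⟨h1, _⟩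
      · exact hcx h1
      · exact hcy h1
    -- J contains a full star centered at c, so A embeds in J : contradiction
    apply hJS A hA
    set z : Fin p := ⟨0, by omega⟩ with hz
    set τ : Fin p ≃ Fin p := Equiv.swap z c with hτ
    refine ⟨σ.trans τ, ?_⟩
    have hcomp : A.map (σ.trans τ).toEmbedding
        = (A.map σ.toEmbedding).map τ.toEmbedding := by
      rw [SimpleGraph.map_map]
      rfl
    rw [hcomp]
    have hstarJ : (starGraph p).map τ.toEmbedding ≤ J := by
      intro u v huv
      simp only [SimpleGraph.map_adj] at huv
      obtain ⟨a, b, hab, rfl, rfl⟩ := huv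
      rw [starGraph, SimpleGraph.fromRel_adj] at hab
      obtain ⟨hab1, hab2 | hab2⟩ := hab
      · have ha : a = z := Fin.ext hab2.1
        subst ha
        have hbz : b ≠ z := fun hb => hab2.2 (by simp [hb, hz])
        have h1 : τ.toEmbedding z = c := Equiv.swap_apply_left z c
        have h2 : τ.toEmbedding b ≠ c := by
          rw [← h1]
          exact fun hb => hbz (τ.toEmbedding.injective hb)
        rw [h1]
        exact hc _ h2
      · have hb : b = z := Fin.ext hab2.1
        subst hb
        have haz : a ≠ z := fun h' => hab2.2 (by simp [h', hz])
        have h1 : τ.toEmbedding z = c := Equiv.swap_apply_left z c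
        have h2 : τ.toEmbedding a ≠ c := by
          rw [← h1]
          exact fun hb => haz (τ.toEmbedding.injective hb)
        rw [h1]
        exact (hc _ h2).symm
    exact le_trans (SimpleGraph.map_monotone _ hσ) hstarJ
  obtain ⟨x', y', hxy', hJxy', hnee⟩ := hne2
  refine ⟨J, s(x', y'), s(x, y), ?_, ?_, ?_, ?_, hnee, hJS, ?_, ?_⟩
  · simp [Sym2.isDiag_iff_proj_eq, hxy']
  · simp [Sym2.isDiag_iff_proj_eq, hxy]
  · rwa [SimpleGraph.mem_edgeSet]
  · rwa [SimpleGraph.mem_edgeSet]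
  · exact hmax _ (by simp [Sym2.isDiag_iff_proj_eq, hxy']) (by rwa [SimpleGraph.mem_edgeSet])
  · exact hmax _ (by simp [Sym2.isDiag_iff_proj_eq, hxy]) (by rwa [SimpleGraph.mem_edgeSet])
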